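/- Let q = p^a be a prime power. Then the normalizer in S_q of a Sylow p-subgroup of S_q has order (p-1)^a · p^e, where e = (p^a - 1)/(p - 1). -/

import Mathlib

open Equiv

namespace SylowSym

variable {p : ℕ} {Y : Type*}

/-- The affine permutation `(t, y) ↦ (d * t + g y, w y)` of `ZMod p × Y`. -/
def aff (d : (ZMod p)ˣ) (g : Y → ZMod p) (w : Perm Y) : Perm (ZMod p × Y) where
  toFun x := ((d : ZMod p) * x.1 + g x.2, w x.2)
  invFun x := ((d⁻¹ : (ZMod p)ˣ) * (x.1 - g (w⁻¹ x.2)), w⁻¹ x.2)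
  left_inv := by
    rintro ⟨t, y⟩
    dsimp only
    rw [show w⁻¹ (w y) = y from w.symm_apply_apply y, add_sub_cancel_right, ← mul_assoc, ← Units.val_mul,
      inv_mul_cancel, Units.val_one, one_mul]
  right_inv := by
    rintro ⟨t, y⟩
    dsimp only
    rw [show w (w⁻¹ y) = y from w.apply_symm_apply y, ← mul_assoc, ← Units.val_mul, mul_inv_cancel, Units.val_one,
      one_mul, sub_add_cancel]

@[simp] theorem aff_apply (d : (ZMod p)ˣ) (g : Y → ZMod p) (w : Perm Y) (x : ZMod p × Y) :
    aff d g w x = ((d : ZMod p) * x.1 + g x.2, w x.2) := rfl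

theorem aff_mul (d d' : (ZMod p)ˣ) (g g' : Y → ZMod p) (w w' : Perm Y) :
    aff d g w * aff d' g' w' =
      aff (d * d') (fun y => (d : ZMod p) * g' y + g (w' y)) (w * w') := by
  refine Equiv.ext fun x => ?_
  simp only [Perm.mul_apply, aff_apply, Units.val_mul, mul_add, mul_assoc, add_assoc]

theorem aff_one : (aff (p := p) (Y := Y) 1 0 1) = 1 := by
  refine Equiv.ext fun x => ?_
  simp

theorem aff_inv (d : (ZMod p)ˣ) (g : Y → ZMod p) (w : Perm Y) :
    (aff d g w)⁻¹ = aff d⁻¹ (fun y => -((d⁻¹ : (ZMod p)ˣ) * g (w⁻¹ y))) w⁻¹ := by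
  refine Equiv.ext fun x => ?_
  show ((d⁻¹ : (ZMod p)ˣ) * (x.1 - g (w⁻¹ x.2)), w⁻¹ x.2) = _
  simp [mul_sub, sub_eq_add_neg, mul_add]

/-- Extraction: the data of an affine permutation is determined. -/
theorem aff_injective [Nonempty Y] :
    Function.Injective fun dgw : (ZMod p)ˣ × (Y → ZMod p) × Perm Y =>
      aff dgw.1 dgw.2.1 dgw.2.2 := by
  rintro ⟨d, g, w⟩ ⟨d', g', w'⟩ h
  simp only at h
  have h0 : ∀ y : Y, ((d : ZMod p) * 0 + g y, w y) = ((d' : ZMod p) * 0 + g' y, w' y) := by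
    intro y
    have := congrArg (fun σ : Perm (ZMod p × Y) => σ (0, y)) h
    simpa using this
  have hg : g = g' := funext fun y => by simpa using congrArg Prod.fst (h0 y)
  have hw : w = w' := Equiv.ext fun y => by simpa using congrArg Prod.snd (h0 y)
  obtain ⟨y0⟩ := ‹Nonempty Y›
  have h1 := congrArg (fun σ : Perm (ZMod p × Y) => (σ (1, y0)).1) h
  simp only [aff_apply, mul_one, hg] at h1
  have hd : (d : ZMod p) = d' := by
    have := add_right_cancel h1
    simpa using this
  refine Prod.ext (Units.ext hd) (Prod.ext hg hw)
/-- The "wreath step": permutations `(t,y) ↦ (t + g y, w y)` with `w ∈ H`. -/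
def step (H : Subgroup (Perm Y)) : Subgroup (Perm (ZMod p × Y)) where
  carrier := {σ | ∃ g w, w ∈ H ∧ σ = aff 1 g w}
  one_mem' := ⟨0, 1, one_mem H, aff_one.symm⟩
  mul_mem' := by
    rintro σ τ ⟨g, w, hw, rfl⟩ ⟨g', w', hw', rfl⟩
    exact ⟨fun y => (1 : (ZMod p)ˣ) * g' y + g (w' y), w * w', mul_mem hw hw',
      by rw [aff_mul, one_mul]⟩
  inv_mem' := by
    rintro σ ⟨g, w, hw, rfl⟩
    exact ⟨fun y => -(((1 : (ZMod p)ˣ)⁻¹ : (ZMod p)ˣ) * g (w⁻¹ y)), w⁻¹, inv_mem hw,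
      by rw [aff_inv, inv_one]⟩

/-- The normalizer candidate: permutations `(t,y) ↦ (d * t + g y, w y)` with `w ∈ H`. -/
def stepN (H : Subgroup (Perm Y)) : Subgroup (Perm (ZMod p × Y)) where
  carrier := {σ | ∃ d g w, w ∈ H ∧ σ = aff d g w}
  one_mem' := ⟨1, 0, 1, one_mem H, aff_one.symm⟩
  mul_mem' := by
    rintro σ τ ⟨d, g, w, hw, rfl⟩ ⟨d', g', w', hw', rfl⟩
    exact ⟨d * d', fun y => (d : ZMod p) * g' y + g (w' y), w * w', mul_mem hw hw',
      aff_mul ..⟩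
  inv_mem' := by
    rintro σ ⟨d, g, w, hw, rfl⟩
    exact ⟨d⁻¹, _, w⁻¹, inv_mem hw, aff_inv ..⟩

theorem mem_step {H : Subgroup (Perm Y)} {σ : Perm (ZMod p × Y)} :
    σ ∈ step H ↔ ∃ g w, w ∈ H ∧ σ = aff 1 g w := Iff.rfl

theorem mem_stepN {H : Subgroup (Perm Y)} {σ : Perm (ZMod p × Y)} :
    σ ∈ stepN H ↔ ∃ d g w, w ∈ H ∧ σ = aff d g w := Iff.rfl

theorem aff_mem_step {H : Subgroup (Perm Y)} (g : Y → ZMod p) {w : Perm Y} (hw : w ∈ H) :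
    aff 1 g w ∈ step H := ⟨g, w, hw, rfl⟩

/-- a `step H` element conjugated by an `aff d g τ` with `τ` in the normalizer stays in
`step H`. -/
theorem aff_conj_mem_step {H : Subgroup (Perm Y)} (d : (ZMod p)ˣ) (g : Y → ZMod p)
    {τ : Perm Y} (hτ : τ ∈ Subgroup.normalizer (H : Set (Perm Y))) {u : Perm (ZMod p × Y)} (hu : u ∈ step H) :
    aff d g τ * u * (aff d g τ)⁻¹ ∈ step H := by
  obtain ⟨h, w, hw, rfl⟩ := hu
  rw [aff_inv, aff_mul, aff_mul]
  refine ⟨_, _, ?_, by congr 1 <;> simp⟩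
  rw [show τ * w * τ⁻¹ = τ * w * τ⁻¹ from rfl]
  exact (Subgroup.mem_normalizer_iff.mp hτ w).mp hw

/-- Transitivity predicate. -/
def Trans' (H : Subgroup (Perm Y)) : Prop := ∀ y y' : Y, ∃ w ∈ H, w y = y'

theorem trans'_step {H : Subgroup (Perm Y)} (hH : Trans' H) : Trans' (step (p := p) H) := by
  rintro ⟨t, y⟩ ⟨t', y'⟩
  obtain ⟨w, hw, hwy⟩ := hH y y'
  exact ⟨aff 1 (fun _ => t' - t) w, aff_mem_step _ hw, by simp [hwy]⟩
theorem shift_comm {H : Subgroup (Perm Y)} (c : ZMod p) {v : Perm (ZMod p × Y)}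
    (hv : v ∈ step H) :
    aff 1 (fun _ => c) 1 * v = v * aff 1 (fun _ => c) 1 := by
  obtain ⟨g, w, hw, rfl⟩ := hv
  rw [aff_mul, aff_mul, one_mul, mul_one]
  congr 1
  funext y
  simp [add_comm]

theorem step_w_mem {H : Subgroup (Perm Y)} {G : Y → ZMod p} {D : (ZMod p)ˣ} {u : Perm Y}
    (h : aff D G u ∈ step H) : u ∈ H := by
  obtain ⟨g', w', hw', he⟩ := h
  have : u = w' := by
    refine Equiv.ext fun y => ?_
    have := congrArg (fun σ : Perm (ZMod p × Y) => (σ (0, y)).2) he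
    simpa using this
  rwa [this]

theorem aff_conj_exists (d : (ZMod p)ˣ) (g : Y → ZMod p) (τ w : Perm Y) (h : Y → ZMod p) :
    ∃ G, aff d g τ * aff 1 h w * (aff d g τ)⁻¹ = aff 1 G (τ * w * τ⁻¹) := by
  rw [aff_inv, aff_mul, aff_mul]
  exact ⟨_, by congr 1 <;> simp⟩

variable [Fact p.Prime] [Fintype Y] [DecidableEq Y] [Nonempty Y]

/-- Any element of `step H` which is central in `step H` is a constant shift. -/
theorem central_shift {H : Subgroup (Perm Y)} (hH : Trans' H) {u : Perm (ZMod p × Y)}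
    (hu : u ∈ step H) (hcomm : ∀ v ∈ step H, u * v = v * u) :
    ∃ c : ZMod p, u = aff 1 (fun _ => c) 1 := by
  obtain ⟨g, w, hw, rfl⟩ := hu
  -- first, w = 1
  have hw1 : w = 1 := by
    refine Equiv.ext fun y => ?_
    by_contra hne
    set h : Y → ZMod p := fun y' => if y' = w y then 1 else 0 with hh
    have hv : aff 1 h 1 ∈ step H := aff_mem_step _ (one_mem H)
    have := hcomm _ hv
    rw [aff_mul, aff_mul, one_mul, mul_one] at this
    have h2 := congrArg (fun σ : Perm (ZMod p × Y) => (σ (0, y)).1) this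
    simp only [aff_apply, Units.val_one, one_mul, mul_zero, zero_add, Perm.one_apply] at h2
    -- h2 : h y + g y = g y + h (w y)
    have h3 : h y = h (w y) := by
      rw [add_comm (h y) (g y)] at h2
      exact add_left_cancel h2
    have h4 : h y = 1 := by rw [h3, hh]; simp
    have hne' : y ≠ w y := fun e => hne (by rw [Perm.one_apply]; exact e.symm)
    rw [hh] at h4
    simp only [if_neg hne'] at h4
    exact zero_ne_one h4
  subst hw1
  -- now g is constant
  obtain ⟨y0⟩ := ‹Nonempty Y›
  refine ⟨g y0, ?_⟩
  have hconst : ∀ y, g y = g y0 := by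
    intro y
    obtain ⟨v, hv, hvy⟩ := hH y0 y
    have := hcomm _ (aff_mem_step 0 hv)
    rw [aff_mul, aff_mul, one_mul, mul_one] at this
    have h2 := congrArg (fun σ : Perm (ZMod p × Y) => (σ (0, y0)).1) this
    simp only [aff_apply, Units.val_one, one_mul, mul_zero, zero_add, Pi.zero_apply] at h2
    -- h2 : 0 + g (v y0) = g y0 + 0 or similar
    rw [hvy] at h2
    simpa using h2
  have : g = fun _ => g y0 := funext hconst
  rw [this]
theorem normalizer_step {H : Subgroup (Perm Y)} (hH : Trans' H) :
    Subgroup.normalizer (step (p := p) H : Set (Perm (ZMod p × Y))) = stepN (Subgroup.normalizer (H : Set (Perm Y))) := by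
  obtain ⟨y0⟩ := ‹Nonempty Y›
  ext σ
  constructor
  · intro hσ
    set z : Perm (ZMod p × Y) := aff 1 (fun _ => (1 : ZMod p)) 1 with hz
    have hz_mem : z ∈ step H := aff_mem_step _ (one_mem H)
    have hmem : σ * z * σ⁻¹ ∈ step H := (Subgroup.mem_normalizer_iff.mp hσ z).mp hz_mem
    have hcomm : ∀ v ∈ step H, (σ * z * σ⁻¹) * v = v * (σ * z * σ⁻¹) := by
      intro v hv
      have hv' : σ⁻¹ * v * σ ∈ step H := by
        have := (Subgroup.mem_normalizer_iff.mp (inv_mem hσ) v).mp hv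
        simpa using this
      have hzc : z * (σ⁻¹ * v * σ) = (σ⁻¹ * v * σ) * z := shift_comm 1 hv'
      have l : σ * (z * (σ⁻¹ * v * σ)) * σ⁻¹ = (σ * z * σ⁻¹) * v := by group
      have r : σ * ((σ⁻¹ * v * σ) * z) * σ⁻¹ = v * (σ * z * σ⁻¹) := by group
      rw [← l, ← r, hzc]
    obtain ⟨c, hc⟩ := central_shift hH hmem hcomm
    have hc0 : c ≠ 0 := by
      intro h0
      have h1 : σ * z * σ⁻¹ = 1 := by
        rw [hc, h0]
        exact aff_one
      have hz1 : z = 1 := by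
        have : z = σ⁻¹ * (σ * z * σ⁻¹) * σ := by group
        rw [this, h1]
        group
      have h2 := congrArg (fun σ' : Perm (ZMod p × Y) => (σ' (0, y0)).1) hz1
      simp only [hz, aff_apply, Units.val_one, one_mul, mul_zero, zero_add,
        Perm.one_apply] at h2
      exact one_ne_zero h2
    -- the pointwise relation
    have hrel : ∀ (t : ZMod p) (y : Y), σ (t + 1, y) = ((σ (t, y)).1 + c, (σ (t, y)).2) := by
      intro t y
      have h1 : σ * z = (aff 1 (fun _ => c) 1) * σ := by
        rw [← hc]; group
      have h2 := congrArg (fun σ' : Perm (ZMod p × Y) => σ' (t, y)) h1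
      simp only [hz, Perm.mul_apply, aff_apply, Units.val_one, one_mul, Perm.one_apply] at h2
      exact h2
    have key : ∀ (n : ℕ) (y : Y), σ ((n : ZMod p), y) = ((σ (0, y)).1 + n * c, (σ (0, y)).2) := by
      intro n
      induction n with
      | zero => intro y; simp
      | succ n ih =>
        intro y
        have hcast : ((n + 1 : ℕ) : ZMod p) = (n : ZMod p) + 1 := by push_cast; ring
        rw [hcast, hrel, ih y]
        refine Prod.ext ?_ rfl
        push_cast
        ring
    have hform : ∀ (t : ZMod p) (y : Y), σ (t, y) = ((σ (0, y)).1 + t * c, (σ (0, y)).2) := by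
      intro t y
      have := key t.val y
      rwa [ZMod.natCast_rightInverse t] at this
    set C : Y → ZMod p := fun y => (σ (0, y)).1 with hC
    set τ0 : Y → Y := fun y => (σ (0, y)).2 with hτ0
    have hcu : IsUnit c := isUnit_iff_ne_zero.mpr hc0
    set cu := hcu.unit with hcudef
    have hcuc : (cu : ZMod p) = c := hcu.unit_spec
    have hinj : Function.Injective τ0 := by
      intro y y' hyy
      have h1 : σ ((cu⁻¹ : (ZMod p)ˣ) * (C y - C y'), y') = σ (0, y) := by
        have hA := hform (((cu⁻¹ : (ZMod p)ˣ) : ZMod p) * (C y - C y')) y'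
        have hB := hform 0 y
        rw [hA, hB]
        refine Prod.ext ?_ hyy.symm
        show C y' + ((cu⁻¹ : (ZMod p)ˣ) : ZMod p) * (C y - C y') * c = C y + 0 * c
        rw [mul_comm ((cu⁻¹ : (ZMod p)ˣ) : ZMod p), mul_assoc, ← hcuc, ← Units.val_mul,
          inv_mul_cancel, Units.val_one, mul_one, zero_mul, add_zero, add_sub_cancel]
      have h2 := σ.injective h1
      simpa using (congrArg Prod.snd h2).symm
    have hbij := Finite.injective_iff_bijective.mp hinj
    set τ : Perm Y := Equiv.ofBijective τ0 hbij with hτ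
    have hσa : σ = aff cu C τ := by
      refine Equiv.ext fun x => ?_
      obtain ⟨t, y⟩ := x
      rw [hform]
      refine Prod.ext ?_ rfl
      show C y + t * c = (cu : ZMod p) * t + C y
      rw [hcuc, mul_comm c t, add_comm]
    have hτn : τ ∈ Subgroup.normalizer (H : Set (Perm Y)) := by
      apply Subgroup.mem_normalizer_fintype
      intro w hw
      have hmem2 : σ * aff 1 0 w * σ⁻¹ ∈ step H :=
        (Subgroup.mem_normalizer_iff.mp hσ _).mp (aff_mem_step 0 hw)
      rw [hσa] at hmem2
      obtain ⟨G, hG⟩ := aff_conj_exists cu C τ w 0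
      rw [hG] at hmem2
      exact step_w_mem hmem2
    exact ⟨cu, C, τ, hτn, hσa⟩
  · rintro ⟨d, g, τ, hτ, rfl⟩
    rw [Subgroup.mem_normalizer_iff]
    intro u
    constructor
    · intro hu
      exact aff_conj_mem_step d g hτ hu
    · intro hu
      have h1 := aff_conj_mem_step (H := H) d⁻¹
        (fun y => -((d⁻¹ : (ZMod p)ˣ) * g (τ⁻¹ y))) (inv_mem hτ) hu
      rw [← aff_inv] at h1
      have e : (aff d g τ)⁻¹ * (aff d g τ * u * (aff d g τ)⁻¹) * ((aff d g τ)⁻¹)⁻¹ = u := by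
        group
      rwa [e] at h1
/-! ### Cardinalities of `step` and `stepN` -/

theorem card_step {H : Subgroup (Perm Y)} :
    Nat.card (step (p := p) H) = p ^ (Fintype.card Y) * Nat.card H := by
  haveI : NeZero p := ⟨(Fact.out : p.Prime).ne_zero⟩
  have hbij : Function.Bijective
      (fun gw : (Y → ZMod p) × H => (⟨aff 1 gw.1 gw.2, aff_mem_step _ gw.2.2⟩ :
        step (p := p) H)) := by
    constructor
    · rintro ⟨g, w, hw⟩ ⟨g', w', hw'⟩ h
      have h2 : aff (p := p) 1 g w = aff 1 g' w' := congrArg Subtype.val h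
      have h3 := aff_injective (p := p) (Y := Y)
        (show (fun dgw : (ZMod p)ˣ × (Y → ZMod p) × Perm Y => aff dgw.1 dgw.2.1 dgw.2.2)
            (1, g, (w : Perm Y)) = (fun dgw => aff dgw.1 dgw.2.1 dgw.2.2) (1, g', w')
          from h2)
      have hg : g = g' := congrArg (fun x => x.2.1) h3
      have hw2 : (w : Perm Y) = w' := congrArg (fun x => x.2.2) h3
      exact Prod.ext hg (Subtype.ext hw2)
    · rintro ⟨σ, g, w, hw, rfl⟩
      exact ⟨⟨g, ⟨w, hw⟩⟩, rfl⟩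
  rw [← Nat.card_eq_of_bijective _ hbij, Nat.card_prod, Nat.card_eq_fintype_card,
    Fintype.card_fun, ZMod.card]

theorem card_stepN {H : Subgroup (Perm Y)} :
    Nat.card (stepN (p := p) H) = (p - 1) * (p ^ (Fintype.card Y) * Nat.card H) := by
  haveI : NeZero p := ⟨(Fact.out : p.Prime).ne_zero⟩
  have hbij : Function.Bijective
      (fun dgw : (ZMod p)ˣ × (Y → ZMod p) × H =>
        (⟨aff dgw.1 dgw.2.1 dgw.2.2, dgw.1, dgw.2.1, dgw.2.2, dgw.2.2.2, rfl⟩ :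
          stepN (p := p) H)) := by
    constructor
    · rintro ⟨d, g, w, hw⟩ ⟨d', g', w', hw'⟩ h
      have h2 : aff (p := p) d g w = aff d' g' w' := congrArg Subtype.val h
      have h3 := aff_injective (p := p) (Y := Y)
        (show (fun dgw : (ZMod p)ˣ × (Y → ZMod p) × Perm Y => aff dgw.1 dgw.2.1 dgw.2.2)
            (d, g, (w : Perm Y)) = (fun dgw => aff dgw.1 dgw.2.1 dgw.2.2) (d', g', w')
          from h2)
      have hd : d = d' := congrArg (fun x => x.1) h3
      have hg : g = g' := congrArg (fun x => x.2.1) h3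
      have hw2 : (w : Perm Y) = w' := congrArg (fun x => x.2.2) h3
      exact Prod.ext hd (Prod.ext hg (Subtype.ext hw2))
    · rintro ⟨σ, d, g, w, hw, rfl⟩
      exact ⟨⟨d, g, ⟨w, hw⟩⟩, rfl⟩
  rw [← Nat.card_eq_of_bijective _ hbij, Nat.card_prod, Nat.card_prod,
    Nat.card_eq_fintype_card (α := (ZMod p)ˣ), ZMod.card_units,
    Nat.card_eq_fintype_card (α := Y → ZMod p), Fintype.card_fun, ZMod.card]
/-! ### The iterated wreath product tower -/

def XX (p : ℕ) : ℕ → Type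
  | 0 => PUnit
  | a + 1 => ZMod p × XX p a

instance XX.fintype (p : ℕ) [NeZero p] : ∀ a, Fintype (XX p a)
  | 0 => inferInstanceAs (Fintype PUnit)
  | a + 1 => letI := XX.fintype p a; inferInstanceAs (Fintype (ZMod p × XX p a))

instance XX.decidableEq (p : ℕ) : ∀ a, DecidableEq (XX p a)
  | 0 => inferInstanceAs (DecidableEq PUnit)
  | a + 1 => letI := XX.decidableEq p a; inferInstanceAs (DecidableEq (ZMod p × XX p a))

instance XX.nonempty (p : ℕ) [NeZero p] : ∀ a, Nonempty (XX p a)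
  | 0 => inferInstanceAs (Nonempty PUnit)
  | a + 1 => letI := XX.nonempty p a; inferInstanceAs (Nonempty (ZMod p × XX p a))

theorem XX.card (p : ℕ) [NeZero p] : ∀ a, Fintype.card (XX p a) = p ^ a
  | 0 => by show Fintype.card PUnit = p ^ 0; simp
  | a + 1 => by
      show Fintype.card (ZMod p × XX p a) = p ^ (a + 1)
      rw [Fintype.card_prod, ZMod.card, XX.card p a, pow_succ, mul_comm]

variable (p : ℕ) [Fact p.Prime]

def Wt : ∀ a, Subgroup (Perm (XX p a))
  | 0 => ⊥
  | a + 1 => step (Wt a)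

def Nt : ∀ a, Subgroup (Perm (XX p a))
  | 0 => ⊥
  | a + 1 => stepN (Nt a)

theorem trans_Wt : ∀ a, Trans' (Wt p a)
  | 0 => fun y y' => ⟨1, one_mem _, Subsingleton.elim (α := PUnit) _ _⟩
  | a + 1 => trans'_step (trans_Wt a)

theorem norm_Wt : ∀ a, Subgroup.normalizer (Wt p a : Set (Perm (XX p a))) = Nt p a
  | 0 => by
      ext σ
      have hσ : σ = 1 := Equiv.ext fun x => Subsingleton.elim (α := PUnit) _ _
      simp only [hσ]
      exact ⟨fun _ => one_mem _, fun _ => one_mem _⟩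
  | a + 1 => by
      show Subgroup.normalizer ((step (p := p) (Wt p a) : Subgroup (Perm (ZMod p × XX p a))) : Set (Perm (ZMod p × XX p a))) = stepN (Nt p a)
      rw [normalizer_step (trans_Wt p a), norm_Wt a]

/-- the exponent `1 + p + ⋯ + p^(a-1)` -/
def eS (a : ℕ) : ℕ := ∑ i ∈ Finset.range a, p ^ i

theorem card_Wt : ∀ a, Nat.card (Wt p a) = p ^ eS p a
  | 0 => by simp [Wt, eS]
  | a + 1 => by
      show Nat.card (step (Wt p a)) = _
      have he : eS p (a + 1) = eS p a + p ^ a := Finset.sum_range_succ (fun i => p ^ i) a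
      rw [card_step, card_Wt a, XX.card, he, pow_add, mul_comm]

theorem card_Nt : ∀ a, Nat.card (Nt p a) = (p - 1) ^ a * p ^ eS p a
  | 0 => by simp [Nt, eS]
  | a + 1 => by
      show Nat.card (stepN (Nt p a)) = _
      have he : eS p (a + 1) = eS p a + p ^ a := Finset.sum_range_succ (fun i => p ^ i) a
      rw [card_stepN, card_Nt a, XX.card, he, pow_add]
      ring

theorem geom_eS (hp : p.Prime) (a : ℕ) : (p - 1) * eS p a + 1 = p ^ a := by
  induction a with
  | zero => simp [eS]
  | succ a ih =>
      have h1 : p - 1 + 1 = p := Nat.succ_pred_eq_of_pos hp.pos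
      have he : eS p (a + 1) = eS p a + p ^ a := Finset.sum_range_succ (fun i => p ^ i) a
      rw [he]
      calc (p - 1) * (eS p a + p ^ a) + 1
          = ((p - 1) * eS p a + 1) + (p - 1) * p ^ a := by ring
        _ = p ^ a + (p - 1) * p ^ a := by rw [ih]
        _ = (p - 1 + 1) * p ^ a := by ring
        _ = p ^ (a + 1) := by rw [h1, pow_succ, mul_comm]

theorem eS_eq (hp : p.Prime) (a : ℕ) : eS p a = (p ^ a - 1) / (p - 1) := by
  have h := geom_eS p hp a
  have h2 : p ^ a - 1 = (p - 1) * eS p a := by omega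
  have h3 : 0 < p - 1 := by have := hp.two_le; omega
  rw [h2, Nat.mul_div_cancel_left _ h3]

theorem legendre (hp : p.Prime) (a : ℕ) :
    (Nat.factorization (Nat.factorial (p ^ a))) p = eS p a := by
  rw [Nat.factorization_def _ hp,
    padicValNat_factorial (show Nat.log p (p ^ a) < a + 1 by
      rw [Nat.log_pow hp.one_lt]; omega)]
  rw [Finset.sum_Ico_eq_sum_range]
  simp only [Nat.add_sub_cancel]
  rw [eS, ← Finset.sum_range_reflect]
  refine Finset.sum_congr rfl fun i hi => ?_
  have hi' : i < a := Finset.mem_range.mp hi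
  rw [Nat.pow_div (by omega) hp.pos]
  congr 1
  omega
/-! ### Transport to `Equiv.Perm (Fin q)` -/

def permMulEquiv {α β : Type*} (e : α ≃ β) : Perm α ≃* Perm β :=
  { Equiv.permCongr e with
    map_mul' := fun σ τ => Equiv.ext fun x => by
      simp [Equiv.permCongr_def, Perm.mul_apply] }

end SylowSym

open SylowSym in
theorem card_normalizer_sylow_symmetric (p a : ℕ) (hp : p.Prime) (ha : 1 ≤ a)
    (q : ℕ) (hq : q = p ^ a) (P : Sylow p (Equiv.Perm (Fin q))) :
    Nat.card (Subgroup.normalizer ((P : Subgroup (Equiv.Perm (Fin q))) : Set (Equiv.Perm (Fin q)))) =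
      (p - 1) ^ a * p ^ ((p ^ a - 1) / (p - 1)) := by
  haveI : Fact p.Prime := ⟨hp⟩
  haveI : NeZero p := ⟨hp.ne_zero⟩
  subst hq
  have hcard : Fintype.card (XX p a) = Fintype.card (Fin (p ^ a)) := by
    rw [XX.card, Fintype.card_fin]
  let e : XX p a ≃ Fin (p ^ a) := Fintype.equivOfCardEq hcard
  let φ : Perm (XX p a) ≃* Perm (Fin (p ^ a)) := permMulEquiv e
  let W' : Subgroup (Perm (Fin (p ^ a))) := (Wt p a).map φ.toMonoidHom
  have hW'card : Nat.card W' = p ^ eS p a := by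
    rw [← card_Wt p a]
    exact (Nat.card_congr ((Wt p a).equivMapOfInjective φ.toMonoidHom
      (EquivLike.injective φ)).toEquiv).symm
  have hfact : (Nat.card (Perm (Fin (p ^ a)))).factorization p = eS p a := by
    rw [Nat.card_eq_fintype_card, Fintype.card_perm, Fintype.card_fin]
    exact legendre p hp a
  let SW : Sylow p (Perm (Fin (p ^ a))) := Sylow.ofCard W' (by rw [hW'card, hfact])
  obtain ⟨g, hg⟩ := MulAction.exists_smul_eq (Perm (Fin (p ^ a))) SW P
  have hP : (P : Subgroup (Perm (Fin (p ^ a)))) = W'.map (MulAut.conj g).toMonoidHom := by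
    rw [← hg]
    rw [Sylow.smul_def, Sylow.pointwise_smul_def, Subgroup.pointwise_smul_def]
    rfl
  let ψ : Perm (XX p a) ≃* Perm (Fin (p ^ a)) := φ.trans (MulAut.conj g)
  have hP2 : (P : Subgroup (Perm (Fin (p ^ a)))) = (Wt p a).map ψ.toMonoidHom := by
    rw [hP]
    show Subgroup.map (MulAut.conj g).toMonoidHom (Subgroup.map φ.toMonoidHom (Wt p a)) = _
    rw [Subgroup.map_map]
    rfl
  rw [hP2, ← Subgroup.map_equiv_normalizer_eq (Wt p a) ψ]
  rw [← Nat.card_congr ((Subgroup.normalizer (Wt p a : Set (Perm (XX p a)))).equivMapOfInjective ψ.toMonoidHom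
    (EquivLike.injective ψ)).toEquiv]
  rw [norm_Wt p a, card_Nt p a, eS_eq p hp a]
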